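/- Let α ≥ 0, let μ : [0,1] → ℝ be continuous with sup |μ| ≤ α, and let D = {(ξ,η) ∈ ℝ² : 0 ≤ η ≤ ξ and ξ + η ≤ 2}. Let (fₙ)_{n≥0} be a sequence of continuous functions on D satisfying f_{n+1}(ξ,η) = (1/4)∫_η^ξ ∫₀^η μ((σ−s)/2) · fₙ(σ,s) ds dσ for all n ≥ 0, and suppose |f₀(ξ,η)| ≤ C for all (ξ,η) ∈ D, where C ≥ 0. Then for every n ≥ 0 and every (ξ,η) ∈ D, |fₙ(ξ,η)| ≤ C · αⁿ · (ξ + η)ⁿ / n!. -/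

import Mathlib

/-- The image of the triangle `{0 ≤ y ≤ x ≤ 1}` under `ξ = x + y`, `η = x - y`. -/
def Dtri : Set (ℝ × ℝ) := {p | 0 ≤ p.2 ∧ p.2 ≤ p.1 ∧ p.1 + p.2 ≤ 2}

/-- Inductive bound for the successive-approximation difference sequence:
if `f_{n+1}(ξ,η) = (1/4)∫_η^ξ ∫₀^η μ((σ-s)/2) fₙ(σ,s) ds dσ` and `|f₀| ≤ C` on `D`,
then `|fₙ(ξ,η)| ≤ C αⁿ (ξ+η)ⁿ / n!`. -/
theorem iterate_factorial_bound (α C : ℝ) (hα : 0 ≤ α) (hC : 0 ≤ C)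
    (μ : ℝ → ℝ) (hμ_cont : ContinuousOn μ (Set.Icc 0 1))
    (hμ_bnd : ∀ x ∈ Set.Icc (0:ℝ) 1, |μ x| ≤ α)
    (f : ℕ → ℝ × ℝ → ℝ)
    (hf_cont : ∀ n, ContinuousOn (f n) Dtri)
    (hrec : ∀ n, ∀ p ∈ Dtri,
      f (n + 1) p = (1 / 4) * ∫ σ in p.2..p.1, ∫ s in (0:ℝ)..p.2, μ ((σ - s) / 2) * f n (σ, s))
    (h0 : ∀ p ∈ Dtri, |f 0 p| ≤ C) :
    ∀ n : ℕ, ∀ p ∈ Dtri, |f n p| ≤ C * α ^ n * (p.1 + p.2) ^ n / (n.factorial : ℝ) := by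
  intro n
  induction n with
  | zero =>
    intro p hp
    simpa using h0 p hp
  | succ n ih =>
    intro p hp
    obtain ⟨hη0, hηξ, hsum⟩ := hp
    set ξ := p.1 with hξ
    set η := p.2 with hη
    have hη1 : η ≤ 1 := by linarith
    have hnfac : (0:ℝ) < (n.factorial : ℝ) := by positivity
    -- the constant
    set c : ℝ := C * α ^ (n + 1) * η / (n.factorial : ℝ) with hc
    have hc0 : 0 ≤ c := by positivity
    -- bound on the inner integral
    have claim1 : ∀ σ ∈ Set.uIoc η ξ,
        ‖∫ s in (0:ℝ)..η, μ ((σ - s) / 2) * f n (σ, s)‖ ≤ c * (σ + η) ^ n := by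
      intro σ hσ
      rw [Set.uIoc_of_le hηξ] at hσ
      obtain ⟨hσ1, hσ2⟩ := hσ
      have hσ0 : 0 ≤ σ := le_of_lt (lt_of_le_of_lt hη0 hσ1)
      have hbnd : ∀ s ∈ Set.uIoc (0:ℝ) η,
          ‖μ ((σ - s) / 2) * f n (σ, s)‖ ≤ α * (C * α ^ n * (σ + η) ^ n / (n.factorial : ℝ)) := by
        intro s hs
        rw [Set.uIoc_of_le hη0] at hs
        obtain ⟨hs0, hs1⟩ := hs
        have hsσ : s ≤ σ := le_of_lt (lt_of_le_of_lt hs1 hσ1)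
        have hmem : ((σ - s) / 2) ∈ Set.Icc (0:ℝ) 1 :=
          Set.mem_Icc.mpr ⟨by linarith, by linarith⟩
        have hD : (σ, s) ∈ Dtri := ⟨le_of_lt hs0, hsσ, by simp; linarith⟩
        have h1 := hμ_bnd _ hmem
        have h2 := ih (σ, s) hD
        have h3 : C * α ^ n * (σ + s) ^ n / (n.factorial : ℝ)
            ≤ C * α ^ n * (σ + η) ^ n / (n.factorial : ℝ) := by
          gcongr <;> linarith
        calc ‖μ ((σ - s) / 2) * f n (σ, s)‖
            = |μ ((σ - s) / 2)| * |f n (σ, s)| := abs_mul _ _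
          _ ≤ α * (C * α ^ n * (σ + s) ^ n / (n.factorial : ℝ)) := by
              apply mul_le_mul h1 h2 (abs_nonneg _) hα
          _ ≤ α * (C * α ^ n * (σ + η) ^ n / (n.factorial : ℝ)) := by
              exact mul_le_mul_of_nonneg_left h3 hα
      have := intervalIntegral.norm_integral_le_of_norm_le_const hbnd
      calc ‖∫ s in (0:ℝ)..η, μ ((σ - s) / 2) * f n (σ, s)‖
          ≤ α * (C * α ^ n * (σ + η) ^ n / (n.factorial : ℝ)) * |η - 0| := this
        _ = c * (σ + η) ^ n := by
            rw [abs_of_nonneg (by linarith : (0:ℝ) ≤ η - 0)]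
            rw [hc]; ring
    -- the bounding function is integrable
    have hKint : IntervalIntegrable (fun σ => c * (σ + η) ^ n) MeasureTheory.volume η ξ := by
      apply Continuous.intervalIntegrable
      continuity
    -- bound the outer integral
    have claim2 : ‖∫ σ in η..ξ, ∫ s in (0:ℝ)..η, μ ((σ - s) / 2) * f n (σ, s)‖
        ≤ |∫ σ in η..ξ, c * (σ + η) ^ n| := by
      apply intervalIntegral.norm_integral_le_abs_of_norm_le _ hKint
      exact (MeasureTheory.ae_restrict_iff' measurableSet_uIoc).mpr
        (Filter.Eventually.of_forall claim1)
    -- compute the bounding integral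
    have hval : ∫ σ in η..ξ, c * (σ + η) ^ n
        = c * (((ξ + η) ^ (n + 1) - (η + η) ^ (n + 1)) / (n + 1)) := by
      rw [intervalIntegral.integral_const_mul]
      congr 1
      rw [intervalIntegral.integral_comp_add_right (fun x => x ^ n), integral_pow]
    have hbrk : 0 ≤ ((ξ + η) ^ (n + 1) - (η + η) ^ (n + 1)) / (n + 1) := by
      apply div_nonneg _ (by positivity)
      have : (η + η) ^ (n + 1) ≤ (ξ + η) ^ (n + 1) := by
        apply pow_le_pow_left₀ (by linarith) (by linarith)
      linarith
    have hval' : |∫ σ in η..ξ, c * (σ + η) ^ n|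
        ≤ c * ((ξ + η) ^ (n + 1) / (n + 1)) := by
      rw [hval, abs_of_nonneg (mul_nonneg hc0 hbrk)]
      apply mul_le_mul_of_nonneg_left _ hc0
      apply div_le_div_of_nonneg_right _ (by positivity)
      have : (0:ℝ) ≤ (η + η) ^ (n + 1) := pow_nonneg (by linarith) _
      linarith
    -- put it together
    have hrw := hrec n p ⟨hη0, hηξ, hsum⟩
    rw [hrw]
    rw [abs_mul]
    have h4 : |(1:ℝ)/4| = 1/4 := by norm_num
    rw [h4]
    have hmain : |∫ σ in η..ξ, ∫ s in (0:ℝ)..η, μ ((σ - s) / 2) * f n (σ, s)|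
        ≤ c * ((ξ + η) ^ (n + 1) / (n + 1)) := le_trans claim2 hval'
    have hfinal : (1/4 : ℝ) * (c * ((ξ + η) ^ (n + 1) / (n + 1)))
        ≤ C * α ^ (n + 1) * (ξ + η) ^ (n + 1) / ((n + 1).factorial : ℝ) := by
      rw [Nat.factorial_succ, hc]
      push_cast
      have hpow : (0:ℝ) ≤ (ξ + η) ^ (n + 1) := pow_nonneg (by linarith) _
      have hn1 : (0:ℝ) < (n:ℝ) + 1 := by positivity
      have hA : (0:ℝ) ≤ C * α ^ (n + 1) := by positivity
      have key : 1/4 * (C * α ^ (n + 1) * η / (n.factorial : ℝ) * ((ξ + η) ^ (n + 1) / ((n:ℝ) + 1)))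
          = (C * α ^ (n + 1) * (η / 4) * (ξ + η) ^ (n + 1)) / (((n:ℝ) + 1) * (n.factorial : ℝ)) := by
        have hF : (n.factorial : ℝ) ≠ 0 := hnfac.ne'
        have hn1' : ((n:ℝ) + 1) ≠ 0 := hn1.ne'
        field_simp
      rw [key]
      apply div_le_div_of_nonneg_right _ (by positivity)
      nlinarith [mul_nonneg hA hpow]
    calc (1/4 : ℝ) * |∫ σ in η..ξ, ∫ s in (0:ℝ)..η, μ ((σ - s) / 2) * f n (σ, s)|
        ≤ (1/4 : ℝ) * (c * ((ξ + η) ^ (n + 1) / (n + 1))) := by linarith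
      _ ≤ C * α ^ (n + 1) * (ξ + η) ^ (n + 1) / ((n + 1).factorial : ℝ) := hfinal
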